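/- Let M₀ be a nonnegative m×n matrix and k ≤ min(m,n). Define M_{i+1} as the reduction of M_i by the column-maximal optimal cover of the zeros of M_i. Then for some i, the matrix M_i has a zero-cost k-assignment. -/

import Mathlib

open Finset

variable {m n : ℕ}

/-- A set of sites is independent (an assignment) if no two of its sites share
a row or a column. -/
def Indep (π : Finset (Fin m × Fin n)) : Prop :=
  ∀ p ∈ π, ∀ q ∈ π, p ≠ q → p.1 ≠ q.1 ∧ p.2 ≠ q.2

/-- The cost of a set of sites in the matrix `M`. -/
def cost (M : Fin m → Fin n → ℝ) (π : Finset (Fin m × Fin n)) : ℝ :=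
  ∑ p ∈ π, M p.1 p.2

/-- `π` is an optimal `k`-assignment in `M`. -/
def IsOptAssign (M : Fin m → Fin n → ℝ) (k : ℕ) (π : Finset (Fin m × Fin n)) : Prop :=
  Indep π ∧ π.card = k ∧
    ∀ σ : Finset (Fin m × Fin n), Indep σ → σ.card = k → cost M π ≤ cost M σ

/-- The set of files consisting of the rows `X` and the columns `Y` covers `Z`. -/
def Covers (X : Finset (Fin m)) (Y : Finset (Fin n)) (Z : Finset (Fin m × Fin n)) : Prop :=
  ∀ p ∈ Z, p.1 ∈ X ∨ p.2 ∈ Y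

/-- `(X, Y)` is a minimum-size cover of `Z`. -/
def IsOptCover (Z : Finset (Fin m × Fin n)) (X : Finset (Fin m)) (Y : Finset (Fin n)) : Prop :=
  Covers X Y Z ∧ ∀ (X' : Finset (Fin m)) (Y' : Finset (Fin n)),
    Covers X' Y' Z → X.card + Y.card ≤ X'.card + Y'.card

open scoped Classical

/-- The set of zeros of a matrix. -/
noncomputable def zeroSet (M : Fin m → Fin n → ℝ) : Finset (Fin m × Fin n) :=
  Finset.univ.filter (fun p => M p.1 p.2 = 0)

/-- `(X, Y)` is the column-maximal optimal cover of `Z`: a minimum-size cover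
containing every column belonging to some minimum-size cover. -/
def ColMaxOptCover (Z : Finset (Fin m × Fin n))
    (X : Finset (Fin m)) (Y : Finset (Fin n)) : Prop :=
  IsOptCover Z X Y ∧ ∀ (j : Fin n) (X' : Finset (Fin m)) (Y' : Finset (Fin n)),
    IsOptCover Z X' Y' → j ∈ Y' → j ∈ Y

/-- `B` is the reduction of `A` by the column-maximal optimal cover of the
zeros of `A`. -/
def Reduces (A B : Fin m → Fin n → ℝ) : Prop :=
  ∃ (X : Finset (Fin m)) (Y : Finset (Fin n)) (t : ℝ),
    ColMaxOptCover (zeroSet A) X Y ∧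
    IsLeast {x : ℝ | ∃ i j, i ∉ X ∧ j ∉ Y ∧ A i j = x} t ∧
    ∀ i j, B i j =
      if i ∈ X then (if j ∈ Y then A i j + t else A i j)
      else (if j ∈ Y then A i j else A i j - t)

/-! ### Auxiliary lemmas -/
lemma indep_card_le_cover {I : Finset (Fin m × Fin n)}
    (hI : Indep I) {X : Finset (Fin m)} {Y : Finset (Fin n)}
    (hc : ∀ p ∈ I, p.1 ∈ X ∨ p.2 ∈ Y) : I.card ≤ X.card + Y.card := by
  classical
  have h := Finset.card_le_card_of_injOn
    (f := fun p : Fin m × Fin n => if p.1 ∈ X then Sum.inl p.1 else Sum.inr p.2)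
    (s := I) (t := X.disjSum Y) ?_ ?_
  · simpa using h
  · intro p hp
    by_cases h1 : p.1 ∈ X
    · simp [h1]
    · have h2 := (hc p hp).resolve_left h1
      simp [h1, h2]
  · intro p hp q hq hpq
    by_contra hne
    have h := hI p hp q hq hne
    by_cases h1 : p.1 ∈ X <;> by_cases h2 : q.1 ∈ X <;> simp [h1, h2] at hpq
    · exact h.1 hpq
    · exact h.2 hpq

lemma cover_matching_rows {Z : Finset (Fin m × Fin n)}
    {X : Finset (Fin m)} {Y : Finset (Fin n)} (h : IsOptCover Z X Y) :
    ∃ f : {i // i ∈ X} → Fin n, Function.Injective f ∧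
      ∀ i : {i // i ∈ X}, (i.1, f i) ∈ Z ∧ f i ∉ Y := by
  classical
  set t : {i // i ∈ X} → Finset (Fin n) :=
    fun i => Finset.univ.filter (fun j => (i.1, j) ∈ Z ∧ j ∉ Y) with ht
  have hall : ∀ S : Finset {i // i ∈ X}, S.card ≤ (S.biUnion t).card := by
    intro S
    by_contra hlt
    push_neg at hlt
    set S' := S.image (fun i => i.1) with hS'
    have hS'sub : S' ⊆ X := by
      intro i hi
      rcases Finset.mem_image.mp hi with ⟨a, _, rfl⟩
      exact a.2
    have hS'card : S'.card = S.card :=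
      Finset.card_image_of_injective _ Subtype.val_injective
    have hcov2 : Covers (X \ S') (Y ∪ S.biUnion t) Z := by
      intro p hp
      rcases h.1 p hp with h1 | h2
      · by_cases hmem : p.1 ∈ S'
        · by_cases hY : p.2 ∈ Y
          · exact Or.inr (Finset.mem_union_left _ hY)
          · rcases Finset.mem_image.mp hmem with ⟨a, haS, hae⟩
            refine Or.inr (Finset.mem_union_right _ (Finset.mem_biUnion.mpr ⟨a, haS, ?_⟩))
            simp only [ht, Finset.mem_filter, Finset.mem_univ, true_and, hae]
            exact ⟨hp, hY⟩
        · exact Or.inl (Finset.mem_sdiff.mpr ⟨h1, hmem⟩)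
      · exact Or.inr (Finset.mem_union_left _ h2)
    have hmin := h.2 _ _ hcov2
    have h3 : (X \ S').card = X.card - S'.card := Finset.card_sdiff_of_subset hS'sub
    have h4 : (Y ∪ S.biUnion t).card ≤ Y.card + (S.biUnion t).card :=
      Finset.card_union_le _ _
    have h5 : S'.card ≤ X.card := Finset.card_le_card hS'sub
    omega
  obtain ⟨f, hfinj, hf⟩ := (Finset.all_card_le_biUnion_card_iff_exists_injective t).mp hall
  refine ⟨f, hfinj, fun i => ?_⟩
  have := hf i
  simp only [ht, Finset.mem_filter, Finset.mem_univ, true_and] at this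
  exact this

lemma isOptCover_swap {Z : Finset (Fin m × Fin n)}
    {X : Finset (Fin m)} {Y : Finset (Fin n)} (h : IsOptCover Z X Y) :
    IsOptCover (Z.image Prod.swap) Y X := by
  classical
  constructor
  · intro p hp
    rcases Finset.mem_image.mp hp with ⟨q, hq, rfl⟩
    rcases h.1 q hq with h1 | h2
    · exact Or.inr h1
    · exact Or.inl h2
  · intro Y' X' hc
    have hc' : Covers X' Y' Z := by
      intro q hq
      have : q.swap ∈ Z.image Prod.swap := Finset.mem_image_of_mem _ hq
      rcases hc _ this with h1 | h2
      · exact Or.inr h1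
      · exact Or.inl h2
    have := h.2 _ _ hc'
    omega

lemma cover_matching_cols {Z : Finset (Fin m × Fin n)}
    {X : Finset (Fin m)} {Y : Finset (Fin n)} (h : IsOptCover Z X Y) :
    ∃ g : {j // j ∈ Y} → Fin m, Function.Injective g ∧
      ∀ j : {j // j ∈ Y}, (g j, j.1) ∈ Z ∧ g j ∉ X := by
  classical
  obtain ⟨g, hginj, hg⟩ := cover_matching_rows (isOptCover_swap h)
  refine ⟨g, hginj, fun j => ?_⟩
  obtain ⟨h1, h2⟩ := hg j
  rcases Finset.mem_image.mp h1 with ⟨q, hq, he⟩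
  have : q = (g j, j.1) := by
    have := congrArg Prod.swap he
    simpa using this
  exact ⟨this ▸ hq, h2⟩

lemma optCover_exists_indep {Z : Finset (Fin m × Fin n)}
    {X : Finset (Fin m)} {Y : Finset (Fin n)} (h : IsOptCover Z X Y) :
    ∃ I : Finset (Fin m × Fin n), Indep I ∧ I.card = X.card + Y.card ∧
      ∀ p ∈ I, p ∈ Z ∧ ((p.1 ∈ X ∧ p.2 ∉ Y) ∨ (p.1 ∉ X ∧ p.2 ∈ Y)) := by
  classical
  obtain ⟨f, hfinj, hf⟩ := cover_matching_rows h
  obtain ⟨g, hginj, hg⟩ := cover_matching_cols h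
  set I1 : Finset (Fin m × Fin n) := X.attach.image (fun i => (i.1, f i)) with hI1
  set I2 : Finset (Fin m × Fin n) := Y.attach.image (fun j => (g j, j.1)) with hI2
  have hmem1 : ∀ p ∈ I1, p ∈ Z ∧ p.1 ∈ X ∧ p.2 ∉ Y := by
    intro p hp
    rcases Finset.mem_image.mp hp with ⟨i, _, rfl⟩
    exact ⟨(hf i).1, i.2, (hf i).2⟩
  have hmem2 : ∀ p ∈ I2, p ∈ Z ∧ p.1 ∉ X ∧ p.2 ∈ Y := by
    intro p hp
    rcases Finset.mem_image.mp hp with ⟨j, _, rfl⟩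
    exact ⟨(hg j).1, (hg j).2, j.2⟩
  refine ⟨I1 ∪ I2, ?_, ?_, ?_⟩
  · intro p hp q hq hne
    rcases Finset.mem_union.mp hp with hp1 | hp2 <;>
      rcases Finset.mem_union.mp hq with hq1 | hq2
    · rcases Finset.mem_image.mp hp1 with ⟨i, _, rfl⟩
      rcases Finset.mem_image.mp hq1 with ⟨i', _, rfl⟩
      have hii : i ≠ i' := fun he => hne (by rw [he])
      exact ⟨fun he => hii (Subtype.ext he), fun he => hii (hfinj he)⟩
    · have h1 := hmem1 p hp1
      have h2 := hmem2 q hq2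
      exact ⟨fun he => h2.2.1 (he ▸ h1.2.1), fun he => h1.2.2 (he ▸ h2.2.2)⟩
    · have h1 := hmem2 p hp2
      have h2 := hmem1 q hq1
      exact ⟨fun he => h1.2.1 (he ▸ h2.2.1), fun he => h2.2.2 (he ▸ h1.2.2)⟩
    · rcases Finset.mem_image.mp hp2 with ⟨j, _, rfl⟩
      rcases Finset.mem_image.mp hq2 with ⟨j', _, rfl⟩
      have hjj : j ≠ j' := fun he => hne (by rw [he])
      exact ⟨fun he => hjj (hginj he), fun he => hjj (Subtype.ext he)⟩
  · have hd : Disjoint I1 I2 := by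
      rw [Finset.disjoint_left]
      intro p hp1 hp2
      exact (hmem2 p hp2).2.1 (hmem1 p hp1).2.1
    rw [Finset.card_union_of_disjoint hd]
    have hc1 : I1.card = X.card := by
      rw [hI1, Finset.card_image_of_injective, Finset.card_attach]
      intro a b hab
      exact Subtype.ext (congrArg Prod.fst hab)
    have hc2 : I2.card = Y.card := by
      rw [hI2, Finset.card_image_of_injective, Finset.card_attach]
      intro a b hab
      exact Subtype.ext (congrArg Prod.snd hab)
    omega
  · intro p hp
    rcases Finset.mem_union.mp hp with hp1 | hp2
    · exact ⟨(hmem1 p hp1).1, Or.inl (hmem1 p hp1).2⟩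
    · exact ⟨(hmem2 p hp2).1, Or.inr (hmem2 p hp2).2⟩

lemma key_step {A B : Fin m → Fin n → ℝ} {X XB : Finset (Fin m)} {Y YB : Finset (Fin n)} {t : ℝ}
    (hcov : ColMaxOptCover (zeroSet A) X Y)
    (ht : IsLeast {x : ℝ | ∃ i j, i ∉ X ∧ j ∉ Y ∧ A i j = x} t)
    (hB : ∀ i j, B i j =
      if i ∈ X then (if j ∈ Y then A i j + t else A i j)
      else (if j ∈ Y then A i j else A i j - t))
    (hcovB : ColMaxOptCover (zeroSet B) XB YB) :
    X.card + Y.card < XB.card + YB.card ∨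
      (XB.card + YB.card = X.card + Y.card ∧ X.card < XB.card) := by
  classical
  obtain ⟨⟨i₀, j₀, hi₀, hj₀, hA0⟩, -⟩ := ht
  have hB0 : (i₀, j₀) ∈ zeroSet B := by
    simp only [zeroSet, Finset.mem_filter, Finset.mem_univ, true_and]
    rw [hB]
    simp [hi₀, hj₀, hA0]
  have hsingly : ∀ p : Fin m × Fin n, p ∈ zeroSet A → ¬(p.1 ∈ X ∧ p.2 ∈ Y) →
      p ∈ zeroSet B := by
    intro p hp hnd
    have hz : A p.1 p.2 = 0 := (Finset.mem_filter.mp hp).2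
    simp only [zeroSet, Finset.mem_filter, Finset.mem_univ, true_and]
    rw [hB]
    rcases hcov.1.1 p hp with h1 | h2
    · have h2 : p.2 ∉ Y := fun hy => hnd ⟨h1, hy⟩
      simp [h1, h2, hz]
    · have h1 : p.1 ∉ X := fun hx => hnd ⟨hx, h2⟩
      simp [h1, h2, hz]
  -- a large independent set inside the zeros of B
  obtain ⟨I, hIindep, hIcard, hImem⟩ := optCover_exists_indep hcov.1
  have hIZB : ∀ p ∈ I, p ∈ zeroSet B := by
    intro p hp
    refine hsingly p (hImem p hp).1 ?_
    rcases (hImem p hp).2 with h1 | h2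
    · exact fun hd => h1.2 hd.2
    · exact fun hd => h2.1 hd.1
  have hle : X.card + Y.card ≤ XB.card + YB.card := by
    rw [← hIcard]
    exact indep_card_le_cover hIindep (fun p hp => hcovB.1.1 p (hIZB p hp))
  rcases lt_or_eq_of_le hle with hlt | hEq
  · exact Or.inl hlt
  right
  refine ⟨hEq.symm, ?_⟩
  -- two combined covers of zeroSet A
  have cover1 : Covers (X ∪ XB) (Y ∩ YB) (zeroSet A) := by
    intro p hp
    by_cases h1 : p.1 ∈ X
    · exact Or.inl (Finset.mem_union_left _ h1)
    · have h2 : p.2 ∈ Y := (hcov.1.1 p hp).resolve_left h1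
      have hpB : p ∈ zeroSet B := hsingly p hp (fun hd => h1 hd.1)
      rcases hcovB.1.1 p hpB with h3 | h4
      · exact Or.inl (Finset.mem_union_right _ h3)
      · exact Or.inr (Finset.mem_inter.mpr ⟨h2, h4⟩)
  have cover2 : Covers (X ∩ XB) (Y ∪ YB) (zeroSet A) := by
    intro p hp
    by_cases h2 : p.2 ∈ Y
    · exact Or.inr (Finset.mem_union_left _ h2)
    · have h1 : p.1 ∈ X := (hcov.1.1 p hp).resolve_right h2
      have hpB : p ∈ zeroSet B := hsingly p hp (fun hd => h2 hd.2)
      rcases hcovB.1.1 p hpB with h3 | h4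
      · exact Or.inl (Finset.mem_inter.mpr ⟨h1, h3⟩)
      · exact Or.inr (Finset.mem_union_right _ h4)
  have c1 := hcov.1.2 _ _ cover1
  have c2 := hcov.1.2 _ _ cover2
  have hXui : (X ∪ XB).card + (X ∩ XB).card = X.card + XB.card :=
    Finset.card_union_add_card_inter _ _
  have hYui : (Y ∪ YB).card + (Y ∩ YB).card = Y.card + YB.card :=
    Finset.card_union_add_card_inter _ _
  have hc2eq : (X ∩ XB).card + (Y ∪ YB).card = X.card + Y.card := by omega
  have opt2 : IsOptCover (zeroSet A) (X ∩ XB) (Y ∪ YB) := by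
    refine ⟨cover2, fun X' Y' hc => ?_⟩
    rw [hc2eq]
    exact hcov.1.2 _ _ hc
  have hYBsub : YB ⊆ Y := by
    intro j hj
    exact hcov.2 j _ _ opt2 (Finset.mem_union_right _ hj)
  have hi₀XB : i₀ ∈ XB :=
    (hcovB.1.1 _ hB0).resolve_right (fun hjYB => hj₀ (hYBsub hjYB))
  by_contra hXB
  push_neg at hXB
  have hYBle : YB.card ≤ Y.card := Finset.card_le_card hYBsub
  have hYBeq : YB = Y := Finset.eq_of_subset_of_card_le hYBsub (by omega)
  have coverXB : Covers XB Y (zeroSet A) := by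
    intro p hp
    by_cases hd : p.1 ∈ X ∧ p.2 ∈ Y
    · exact Or.inr hd.2
    · have hpB : p ∈ zeroSet B := hsingly p hp hd
      rcases hcovB.1.1 p hpB with h3 | h4
      · exact Or.inl h3
      · exact Or.inr (hYBeq ▸ h4)
  have optXB : IsOptCover (zeroSet A) XB Y := by
    refine ⟨coverXB, fun X' Y' hc => ?_⟩
    have : XB.card + Y.card = X.card + Y.card := by
      rw [← hYBeq] at *
      omega
    rw [this]
    exact hcov.1.2 _ _ hc
  obtain ⟨f, -, hf⟩ := cover_matching_rows optXB
  obtain ⟨h1, h2⟩ := hf ⟨i₀, hi₀XB⟩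
  rcases hcov.1.1 _ h1 with h3 | h4
  · exact hi₀ h3
  · exact h2 h4

/-- iterating reduction by the column-maximal optimal cover
eventually produces a matrix with a zero-cost `k`-assignment. -/
theorem reduction_terminates
    (k : ℕ) (hk1 : 1 ≤ k) (hk : k ≤ min m n)
    (M : ℕ → Fin m → Fin n → ℝ) (hM0 : ∀ i j, 0 ≤ M 0 i j)
    (hstep : ∀ s : ℕ,
      (¬ ∃ π : Finset (Fin m × Fin n), Indep π ∧ π.card = k ∧ cost (M s) π = 0) →
      Reduces (M s) (M (s + 1))) :
    ∃ (s : ℕ) (π : Finset (Fin m × Fin n)), Indep π ∧ π.card = k ∧ cost (M s) π = 0 := by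
  classical
  by_contra h
  push_neg at h
  have hno : ∀ s, ¬ ∃ π : Finset (Fin m × Fin n), Indep π ∧ π.card = k ∧ cost (M s) π = 0 := by
    intro s ⟨π, h1, h2, h3⟩
    exact h s π h1 h2 h3
  have hred : ∀ s, Reduces (M s) (M (s + 1)) := fun s => hstep s (hno s)
  choose X Y t hcmoc hleast hB using hred
  -- the size of an optimal cover is at most k - 1
  have hbound : ∀ s, (X s).card + (Y s).card + 1 ≤ k := by
    intro s
    by_contra hb
    push_neg at hb
    obtain ⟨I, hIindep, hIcard, hImem⟩ := optCover_exists_indep (hcmoc s).1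
    have hkI : k ≤ I.card := by omega
    obtain ⟨π, hπsub, hπcard⟩ := Finset.exists_subset_card_eq hkI
    refine hno s ⟨π, fun p hp q hq => hIindep p (hπsub hp) q (hπsub hq), hπcard, ?_⟩
    refine Finset.sum_eq_zero (fun p hp => ?_)
    exact (Finset.mem_filter.mp (hImem p (hπsub hp)).1).2
  have hXle : ∀ s, (X s).card ≤ m := by
    intro s
    have := Finset.card_le_univ (X s)
    simpa using this
  set μ : ℕ → ℕ := fun s => ((X s).card + (Y s).card) * (m + 1) + (X s).card with hμ
  have hmono : ∀ s, μ s < μ (s + 1) := by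
    intro s
    rcases key_step (hcmoc s) (hleast s) (hB s) (hcmoc (s + 1)) with hlt | ⟨he, hx⟩
    · have h1 : ((X s).card + (Y s).card + 1) * (m + 1) ≤
          ((X (s + 1)).card + (Y (s + 1)).card) * (m + 1) :=
        Nat.mul_le_mul_right _ hlt
      have h2 := hXle s
      simp only [hμ, add_mul, one_mul] at h1 ⊢
      omega
    · simp only [hμ, he]
      omega
  have hsle : ∀ s, s ≤ μ s := by
    intro s
    induction s with
    | zero => exact Nat.zero_le _
    | succ s ih => exact Nat.lt_of_le_of_lt ih (hmono s)
  set s₀ := (k - 1) * (m + 1) + m + 1 with hs₀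
  have hub : μ s₀ ≤ (k - 1) * (m + 1) + m := by
    have h1 : ((X s₀).card + (Y s₀).card) * (m + 1) ≤ (k - 1) * (m + 1) := by
      refine Nat.mul_le_mul_right _ ?_
      have := hbound s₀
      omega
    exact add_le_add h1 (hXle s₀)
  have := hsle s₀
  omega
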